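/- For every ω₀ > 0, one has 1 − ω₀² (G_{ω₀}(0) + G_{ω₀}(1)) = 2/(2 + ω₀² + ω₀ √(ω₀² + 4)). -/

import Mathlib

open Real

/-- The constant `D = 1 − ω₀²(G_{ω₀}(0) + G_{ω₀}(1))` appearing in the
thermal conductivity of the chain has the explicit value `2/(2 + ω₀² + ω₀ √(ω₀² + 4))`,
where `G_{ω₀}(x) = (1/(ω₀ √(ω₀² + 4))) (1 + ω₀²/2 + ω₀ √(1 + ω₀²/4))^(−|x|)` is the Green's
function of `ω₀² − Δ` on `ℤ`. -/
theorem D_explicit_formula (ω₀ : ℝ) (hω : 0 < ω₀) (G : ℤ → ℝ)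
    (hG : ∀ x : ℤ, G x = (1 / (ω₀ * Real.sqrt (ω₀ ^ 2 + 4))) *
        (1 + ω₀ ^ 2 / 2 + ω₀ * Real.sqrt (1 + ω₀ ^ 2 / 4)) ^ (-|x|)) :
    1 - ω₀ ^ 2 * (G 0 + G 1) = 2 / (2 + ω₀ ^ 2 + ω₀ * Real.sqrt (ω₀ ^ 2 + 4)) := by
  set s := Real.sqrt (ω₀ ^ 2 + 4) with hsdef
  have h4 : (0:ℝ) < ω₀ ^ 2 + 4 := by positivity
  have hs : 0 < s := Real.sqrt_pos.mpr h4
  have hs2 : s ^ 2 = ω₀ ^ 2 + 4 := Real.sq_sqrt h4.le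
  have hhalf : Real.sqrt (1 + ω₀ ^ 2 / 4) = s / 2 := by
    rw [show (1 + ω₀ ^ 2 / 4) = (s / 2) ^ 2 by nlinarith [hs2]]
    exact Real.sqrt_sq (by positivity)
  have hl : 0 < 1 + ω₀ ^ 2 / 2 + ω₀ * (s / 2) := by positivity
  have hden : 0 < 2 + ω₀ ^ 2 + ω₀ * s := by positivity
  rw [hG 0, hG 1, hhalf]
  norm_num
  field_simp
  linear_combination ω₀ * hs2
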